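/- For 0 < p < ∞, a bicomplex-valued function f = p⁺f⁺ + p⁻f⁻ on D lies in the bicomplex Hardy space H^p(D, 𝔹) if and only if (f⁺)* and f⁻ lie in the classical holomorphic Hardy space H^p(D). -/

import Mathlib

open MeasureTheory Filter Topology Set

noncomputable section

/-- The open unit disk in `ℂ`. -/
def 𝔻 : Set ℂ := Metric.ball 0 1

/-- The bicomplex norm of the bicomplex number with idempotent components `a`, `b`:
`‖p⁺a + p⁻b‖_𝔹 = √((|a|² + |b|²)/2)`. -/
def bnorm (a b : ℂ) : ℝ := Real.sqrt ((‖a‖ ^ 2 + ‖b‖ ^ 2) / 2)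

/-- The Wirtinger derivative `∂g/∂z = (1/2)(∂g/∂x − i ∂g/∂y)`. -/
def wirt (g : ℂ → ℂ) (z : ℂ) : ℂ :=
  (fderiv ℝ g z 1 - Complex.I * fderiv ℝ g z Complex.I) / 2

/-- The Wirtinger derivative `∂g/∂z̄ = (1/2)(∂g/∂x + i ∂g/∂y)`. -/
def wirtBar (g : ℂ → ℂ) (z : ℂ) : ℂ :=
  (fderiv ℝ g z 1 + Complex.I * fderiv ℝ g z Complex.I) / 2

/-- The Cauchy–Pompeiu operator `T(g)(z) = −(1/π)∬_D g(ζ)/(ζ − z)`. -/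
def T (g : ℂ → ℂ) (z : ℂ) : ℂ := -(1 / Real.pi : ℝ) • ∫ ζ in 𝔻, g ζ / (ζ - z)

/-- The plus idempotent component of the bicomplex Theodorescu operator:
`(T((g)*))*`, i.e. `z ↦ −(1/π)∬_D g(ζ)/(ζ* − z*)`. -/
def Tp (g : ℂ → ℂ) (z : ℂ) : ℂ :=
  (starRingEnd ℂ) (T (fun ζ => (starRingEnd ℂ) (g ζ)) z)

/-- The point `r e^{iθ}`. -/
def circ (r θ : ℝ) : ℂ := (r : ℂ) * Complex.exp ((θ : ℂ) * Complex.I)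

/-- Finiteness of the bicomplex Hardy `p`-norm of the function with idempotent
components `fp`, `fm`. -/
def HardyFinB (p : ℝ) (fp fm : ℂ → ℂ) : Prop :=
  ∃ M : ℝ, ∀ r ∈ Set.Ioo (0 : ℝ) 1,
    (∫ θ in Set.Ioo 0 (2 * Real.pi), bnorm (fp (circ r θ)) (fm (circ r θ)) ^ p) ≤ M

/-- `𝔹`-holomorphy (`∂̄f = 0`) of the function with idempotent components `fp`, `fm`:
the components are real-differentiable on `𝔻` and satisfy `∂f⁺/∂z = 0`, `∂f⁻/∂z̄ = 0`. -/
def BHolo (fp fm : ℂ → ℂ) : Prop :=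
  ∀ z ∈ 𝔻, DifferentiableAt ℝ fp z ∧ DifferentiableAt ℝ fm z ∧
    wirt fp z = 0 ∧ wirtBar fm z = 0

/-- Membership in the classical holomorphic Hardy space `H^p(D)`. -/
def MemHp (p : ℝ) (g : ℂ → ℂ) : Prop :=
  DifferentiableOn ℂ g 𝔻 ∧
  ∃ M : ℝ, ∀ r ∈ Set.Ioo (0 : ℝ) 1,
    (∫ θ in Set.Ioo 0 (2 * Real.pi), ‖g (circ r θ)‖ ^ p) ≤ M

/-! ### Auxiliary lemmas -/

/-- A real-differentiable function with vanishing `∂/∂z̄` is complex-differentiable. -/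
lemma cr_bar {g : ℂ → ℂ} {z : ℂ} (hd : DifferentiableAt ℝ g z) (hw : wirtBar g z = 0) :
    DifferentiableAt ℂ g z := by
  set L := fderiv ℝ g z with hL
  have h1 : L 1 + Complex.I * L Complex.I = 0 := by
    unfold wirtBar at hw
    field_simp at hw
    simpa [hL] using hw
  have hI : L Complex.I = Complex.I * L 1 := by
    linear_combination (-Complex.I) * h1 + (L Complex.I) * Complex.I_sq
  rw [differentiableAt_iff_restrictScalars ℝ hd]
  refine ⟨L 1 • ContinuousLinearMap.id ℂ ℂ, ?_⟩
  apply ContinuousLinearMap.ext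
  intro w
  have : ((L 1 • ContinuousLinearMap.id ℂ ℂ).restrictScalars ℝ) w = L 1 * w := by
    simp
  rw [this]
  conv_rhs => rw [← Complex.re_add_im w,
    show ((w.re:ℂ) + (w.im:ℂ) * Complex.I) = (w.re:ℝ) • (1:ℂ) + (w.im:ℝ) • Complex.I by
      simp [Complex.real_smul]]
  rw [map_add, _root_.map_smul, _root_.map_smul, hI, Complex.real_smul, Complex.real_smul]
  conv_lhs => rw [← Complex.re_add_im w]
  ring

/-- A complex-differentiable function has vanishing `∂/∂z̄`. -/
lemma cr_bar_rev {g : ℂ → ℂ} {z : ℂ} (hd : DifferentiableAt ℂ g z) :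
    wirtBar g z = 0 := by
  have h := hd.fderiv_restrictScalars ℝ
  unfold wirtBar
  rw [h]
  have : (fderiv ℂ g z) Complex.I = Complex.I * (fderiv ℂ g z) 1 := by
    rw [show (Complex.I : ℂ) = Complex.I • (1:ℂ) by simp, _root_.map_smul]
    simp [smul_eq_mul]
  simp only [ContinuousLinearMap.coe_restrictScalars']
  rw [this]
  linear_combination ((fderiv ℂ g z) 1 / 2) * Complex.I_sq

lemma diffAt_conj {g : ℂ → ℂ} {z : ℂ} (h : DifferentiableAt ℝ g z) :
    DifferentiableAt ℝ (fun w => (starRingEnd ℂ) (g w)) z := by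
  have := Complex.conjCLE.differentiableAt.comp z h
  simpa [Function.comp_def, Complex.conjCLE_apply] using this

lemma wirtBar_conj {g : ℂ → ℂ} {z : ℂ} (hd : DifferentiableAt ℝ g z) :
    wirtBar (fun w => (starRingEnd ℂ) (g w)) z = (starRingEnd ℂ) (wirt g z) := by
  have hfun : (fun w => (starRingEnd ℂ) (g w)) = (⇑Complex.conjCLE) ∘ g := by
    funext w; simp [Complex.conjCLE_apply]
  have h : HasFDerivAt (fun w => (starRingEnd ℂ) (g w))
      ((Complex.conjCLE : ℂ →L[ℝ] ℂ).comp (fderiv ℝ g z)) z := by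
    rw [hfun]
    exact Complex.conjCLE.hasFDerivAt.comp z hd.hasFDerivAt
  rw [wirtBar, wirt, h.fderiv]
  simp only [ContinuousLinearMap.coe_comp', Function.comp_apply,
    ContinuousLinearEquiv.coe_coe, Complex.conjCLE_apply]
  rw [map_div₀, map_sub, map_mul, Complex.conj_I,
    map_ofNat (starRingEnd ℂ) 2]
  ring

lemma circ_mem {r : ℝ} (hr : r ∈ Set.Ioo (0:ℝ) 1) (θ : ℝ) : circ r θ ∈ 𝔻 := by
  have h : ‖circ r θ‖ = r := by
    rw [circ, norm_mul, Complex.norm_exp]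
    simp [Complex.norm_real, abs_of_pos hr.1, Complex.mul_re, Complex.I_re,
      Complex.I_im, Complex.ofReal_re, Complex.ofReal_im, Real.exp_zero]
  simp only [𝔻, Metric.mem_ball, Complex.dist_eq, sub_zero, h]
  exact hr.2

lemma circ_cont (r : ℝ) : Continuous fun θ : ℝ => circ r θ := by
  unfold circ; fun_prop

lemma cont_comp {g : ℂ → ℂ} (hg : ∀ z ∈ 𝔻, ContinuousAt g z) {r : ℝ}
    (hr : r ∈ Set.Ioo (0:ℝ) 1) : Continuous fun θ : ℝ => g (circ r θ) := by
  rw [continuous_iff_continuousAt]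
  intro θ
  exact (hg _ (circ_mem hr θ)).comp (circ_cont r).continuousAt

lemma bnorm_nonneg (a b : ℂ) : 0 ≤ bnorm a b := Real.sqrt_nonneg _

lemma abs_le_bnorm_l (a b : ℂ) : ‖a‖ ≤ Real.sqrt 2 * bnorm a b := by
  rw [bnorm, ← Real.sqrt_mul (by norm_num : (0:ℝ) ≤ 2),
    show (2:ℝ) * ((‖a‖ ^ 2 + ‖b‖ ^ 2)/2)
      = ‖a‖ ^ 2 + ‖b‖ ^ 2 by ring]
  calc ‖a‖ = Real.sqrt (‖a‖ ^ 2) := by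
        rw [Real.sqrt_sq (norm_nonneg a)]
  _ ≤ _ := Real.sqrt_le_sqrt (le_add_of_nonneg_right (by positivity))

lemma abs_le_bnorm_r (a b : ℂ) : ‖b‖ ≤ Real.sqrt 2 * bnorm a b := by
  have := abs_le_bnorm_l b a
  rwa [show bnorm b a = bnorm a b by rw [bnorm, bnorm, add_comm]] at this

lemma bnorm_le_max (a b : ℂ) : bnorm a b ≤ max (‖a‖) (‖b‖) := by
  have h : (‖a‖ ^ 2 + ‖b‖ ^ 2) / 2
      ≤ (max (‖a‖) (‖b‖)) ^ 2 := by
    have h1 : ‖a‖ ^ 2 ≤ (max (‖a‖) (‖b‖)) ^ 2 :=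
      pow_le_pow_left₀ (norm_nonneg a) (le_max_left _ _) 2
    have h2 : ‖b‖ ^ 2 ≤ (max (‖a‖) (‖b‖)) ^ 2 :=
      pow_le_pow_left₀ (norm_nonneg b) (le_max_right _ _) 2
    linarith
  calc bnorm a b ≤ Real.sqrt ((max (‖a‖) (‖b‖)) ^ 2) :=
        Real.sqrt_le_sqrt h
  _ = _ := Real.sqrt_sq (le_trans (norm_nonneg a) (le_max_left _ _))

lemma rpow_abs_le {p : ℝ} (hp : 0 ≤ p) (a b : ℂ) :
    ‖a‖ ^ p ≤ Real.sqrt 2 ^ p * bnorm a b ^ p := by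
  rw [← Real.mul_rpow (Real.sqrt_nonneg 2) (bnorm_nonneg a b)]
  exact Real.rpow_le_rpow (norm_nonneg a) (abs_le_bnorm_l a b) hp

lemma rpow_abs_le' {p : ℝ} (hp : 0 ≤ p) (a b : ℂ) :
    ‖b‖ ^ p ≤ Real.sqrt 2 ^ p * bnorm a b ^ p := by
  rw [← Real.mul_rpow (Real.sqrt_nonneg 2) (bnorm_nonneg a b)]
  exact Real.rpow_le_rpow (norm_nonneg b) (abs_le_bnorm_r a b) hp

lemma rpow_bnorm_le {p : ℝ} (hp : 0 ≤ p) (a b : ℂ) :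
    bnorm a b ^ p ≤ ‖a‖ ^ p + ‖b‖ ^ p := by
  rcases le_total (‖a‖) (‖b‖) with h | h
  · have h1 : bnorm a b ^ p ≤ ‖b‖ ^ p :=
      Real.rpow_le_rpow (bnorm_nonneg a b)
        ((bnorm_le_max a b).trans_eq (max_eq_right h)) hp
    have : (0:ℝ) ≤ ‖a‖ ^ p := Real.rpow_nonneg (norm_nonneg a) p
    linarith
  · have h1 : bnorm a b ^ p ≤ ‖a‖ ^ p :=
      Real.rpow_le_rpow (bnorm_nonneg a b)
        ((bnorm_le_max a b).trans_eq (max_eq_left h)) hp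
    have : (0:ℝ) ≤ ‖b‖ ^ p := Real.rpow_nonneg (norm_nonneg b) p
    linarith

lemma integrableOn_Ioo_of_cont {F : ℝ → ℝ} (h : Continuous F) :
    IntegrableOn F (Set.Ioo 0 (2 * Real.pi)) :=
  (h.integrableOn_Icc).mono_set Set.Ioo_subset_Icc_self

/-- for `0 < p < ∞`, `f = p⁺f⁺ + p⁻f⁻` lies in the bicomplex Hardy
space `H^p(D,𝔹)` (i.e. `∂̄f = 0` and finite bicomplex Hardy norm) iff `(f⁺)*` and
`f⁻` lie in the classical holomorphic Hardy space `H^p(D)`. -/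
theorem stmt10 (p : ℝ) (hp : 0 < p) (fp fm : ℂ → ℂ) :
    (BHolo fp fm ∧ HardyFinB p fp fm) ↔
      (MemHp p (fun z => (starRingEnd ℂ) (fp z)) ∧ MemHp p fm) := by
  have hopen : IsOpen 𝔻 := Metric.isOpen_ball
  constructor
  · rintro ⟨hB, M, hM⟩
    have hcp : ∀ z ∈ 𝔻, ContinuousAt fp z := fun z hz => (hB z hz).1.continuousAt
    have hcm : ∀ z ∈ 𝔻, ContinuousAt fm z := fun z hz => (hB z hz).2.1.continuousAt
    have key : ∀ r ∈ Set.Ioo (0:ℝ) 1, ∀ g : ℂ → ℂ, (∀ z ∈ 𝔻, ContinuousAt g z) →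
        (∀ θ : ℝ, ‖g (circ r θ)‖ ^ p
          ≤ Real.sqrt 2 ^ p * bnorm (fp (circ r θ)) (fm (circ r θ)) ^ p) →
        (∫ θ in Set.Ioo 0 (2 * Real.pi), ‖g (circ r θ)‖ ^ p)
          ≤ Real.sqrt 2 ^ p * M := by
      intro r hr g hgc hle
      have hcont1 : Continuous fun θ : ℝ => ‖g (circ r θ)‖ ^ p :=
        ((continuous_norm.comp (cont_comp hgc hr)).rpow_const
          (fun _ => Or.inr hp.le))
      have hcont2 : Continuous fun θ : ℝ =>
          Real.sqrt 2 ^ p * bnorm (fp (circ r θ)) (fm (circ r θ)) ^ p := by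
        apply continuous_const.mul
        apply Continuous.rpow_const _ (fun _ => Or.inr hp.le)
        unfold bnorm
        exact Real.continuous_sqrt.comp (by
          apply Continuous.div_const
          exact ((continuous_norm.comp (cont_comp hcp hr)).pow 2).add
            ((continuous_norm.comp (cont_comp hcm hr)).pow 2))
      calc (∫ θ in Set.Ioo 0 (2 * Real.pi), ‖g (circ r θ)‖ ^ p)
          ≤ ∫ θ in Set.Ioo 0 (2 * Real.pi),
            Real.sqrt 2 ^ p * bnorm (fp (circ r θ)) (fm (circ r θ)) ^ p :=
          setIntegral_mono_on (integrableOn_Ioo_of_cont hcont1)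
            (integrableOn_Ioo_of_cont hcont2) measurableSet_Ioo (fun θ _ => hle θ)
        _ = Real.sqrt 2 ^ p *
            ∫ θ in Set.Ioo 0 (2 * Real.pi), bnorm (fp (circ r θ)) (fm (circ r θ)) ^ p :=
          integral_const_mul _ _
        _ ≤ Real.sqrt 2 ^ p * M :=
          mul_le_mul_of_nonneg_left (hM r hr) (Real.rpow_nonneg (Real.sqrt_nonneg 2) p)
    refine ⟨⟨?_, Real.sqrt 2 ^ p * M, fun r hr => ?_⟩, ?_, Real.sqrt 2 ^ p * M,
      fun r hr => ?_⟩
    · intro z hz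
      exact (cr_bar (diffAt_conj (hB z hz).1)
        (by rw [wirtBar_conj (hB z hz).1, (hB z hz).2.2.1, map_zero])).differentiableWithinAt
    · refine key r hr (fun z => (starRingEnd ℂ) (fp z))
        (fun z hz => (Complex.continuous_conj.continuousAt).comp (hcp z hz)) ?_
      intro θ
      simpa [Complex.norm_conj] using rpow_abs_le hp.le (fp (circ r θ)) (fm (circ r θ))
    · intro z hz
      exact (cr_bar (hB z hz).2.1 (hB z hz).2.2.2).differentiableWithinAt
    · exact key r hr fm hcm (fun θ => rpow_abs_le' hp.le (fp (circ r θ)) (fm (circ r θ)))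
  · rintro ⟨⟨hd1, M1, hM1⟩, hd2, M2, hM2⟩
    have hdp : ∀ z ∈ 𝔻, DifferentiableAt ℂ (fun w => (starRingEnd ℂ) (fp w)) z :=
      fun z hz => (hd1 z hz).differentiableAt (hopen.mem_nhds hz)
    have hdm : ∀ z ∈ 𝔻, DifferentiableAt ℂ fm z :=
      fun z hz => (hd2 z hz).differentiableAt (hopen.mem_nhds hz)
    have hdpR : ∀ z ∈ 𝔻, DifferentiableAt ℝ fp z := by
      intro z hz
      have h := diffAt_conj ((hdp z hz).restrictScalars ℝ)
      simpa using h
    have hB : BHolo fp fm := by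
      intro z hz
      refine ⟨hdpR z hz, (hdm z hz).restrictScalars ℝ, ?_, cr_bar_rev (hdm z hz)⟩
      have h0 : wirtBar (fun w => (starRingEnd ℂ) (fp w)) z = 0 := cr_bar_rev (hdp z hz)
      rw [wirtBar_conj (hdpR z hz)] at h0
      exact star_eq_zero.mp h0
    refine ⟨hB, M1 + M2, fun r hr => ?_⟩
    have hcp : ∀ z ∈ 𝔻, ContinuousAt fp z := fun z hz => (hdpR z hz).continuousAt
    have hcm : ∀ z ∈ 𝔻, ContinuousAt fm z :=
      fun z hz => ((hdm z hz).restrictScalars ℝ).continuousAt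
    have hcontb : Continuous fun θ : ℝ =>
        bnorm (fp (circ r θ)) (fm (circ r θ)) ^ p := by
      apply Continuous.rpow_const _ (fun _ => Or.inr hp.le)
      unfold bnorm
      exact Real.continuous_sqrt.comp (by
        apply Continuous.div_const
        exact ((continuous_norm.comp (cont_comp hcp hr)).pow 2).add
          ((continuous_norm.comp (cont_comp hcm hr)).pow 2))
    have hcont1 : Continuous fun θ : ℝ => ‖fp (circ r θ)‖ ^ p :=
      ((continuous_norm.comp (cont_comp hcp hr)).rpow_const
        (fun _ => Or.inr hp.le))
    have hcont2 : Continuous fun θ : ℝ => ‖fm (circ r θ)‖ ^ p :=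
      ((continuous_norm.comp (cont_comp hcm hr)).rpow_const
        (fun _ => Or.inr hp.le))
    have hM1' := hM1 r hr
    simp only [Complex.norm_conj] at hM1'
    calc (∫ θ in Set.Ioo 0 (2 * Real.pi), bnorm (fp (circ r θ)) (fm (circ r θ)) ^ p)
        ≤ ∫ θ in Set.Ioo 0 (2 * Real.pi),
          (‖fp (circ r θ)‖ ^ p + ‖fm (circ r θ)‖ ^ p) :=
        setIntegral_mono_on (integrableOn_Ioo_of_cont hcontb)
          (integrableOn_Ioo_of_cont (hcont1.add hcont2)) measurableSet_Ioo
          (fun θ _ => rpow_bnorm_le hp.le _ _)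
      _ = (∫ θ in Set.Ioo 0 (2 * Real.pi), ‖fp (circ r θ)‖ ^ p)
          + ∫ θ in Set.Ioo 0 (2 * Real.pi), ‖fm (circ r θ)‖ ^ p :=
        integral_add (integrableOn_Ioo_of_cont hcont1) (integrableOn_Ioo_of_cont hcont2)
      _ ≤ M1 + M2 := add_le_add hM1' (hM2 r hr)
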